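/- Let a1, a2, a3 be nonzero real numbers with A = a1*a2 + a1*a3 + a2*a3 ≠ 0, and let x1, x2, x3 be positive reals. Let J be the 3×3 Jacobian matrix of the map (x1,x2,x3) ↦ (f(x1,x2,x3), g(x1,x2,x3), h(x1,x2,x3)) at the point (x1,x2,x3). Then det J = 0, trace J = 2*F1(x1,x2,x3)/(A*x1*x2*x3), and ((trace J)^2 - trace(J^2))/2 = F2(x1,x2,x3)/(A^2*x1^2*x2^2*x3^2); equivalently, the characteristic polynomial of J is t^3 - (2*F1/(A*x1*x2*x3))*t^2 + (F2/(A^2*x1^2*x2^2*x3^2))*t. -/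

import Mathlib

noncomputable section
open Real Set

/-- `A = a1*a2 + a1*a3 + a2*a3`. -/
def AA (a1 a2 a3 : ℝ) : ℝ := a1*a2 + a1*a3 + a2*a3

/-- The auxiliary function `B`. -/
def Bfun (a1 a2 a3 x1 x2 x3 : ℝ) : ℝ :=
  (1/(a1*x1) + 1/(a2*x2) + 1/(a3*x3) - (x1/(x2*x3) + x2/(x1*x3) + x3/(x1*x2))) *
    (1/a1 + 1/a2 + 1/a3)⁻¹

/-- First component of the normalized Ricci flow vector field. -/
def fRF (a1 a2 a3 x1 x2 x3 : ℝ) : ℝ :=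
  -1 - a1*x1*(x1/(x2*x3) - x2/(x1*x3) - x3/(x1*x2)) + x1 * Bfun a1 a2 a3 x1 x2 x3

/-- Second component of the normalized Ricci flow vector field. -/
def gRF (a1 a2 a3 x1 x2 x3 : ℝ) : ℝ :=
  -1 - a2*x2*(x2/(x1*x3) - x3/(x1*x2) - x1/(x2*x3)) + x2 * Bfun a1 a2 a3 x1 x2 x3

/-- Third component of the normalized Ricci flow vector field. -/
def hRF (a1 a2 a3 x1 x2 x3 : ℝ) : ℝ :=
  -1 - a3*x3*(x3/(x1*x2) - x1/(x2*x3) - x2/(x1*x3)) + x3 * Bfun a1 a2 a3 x1 x2 x3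

/-- The quantity `F1` (trace numerator). -/
def F1 (a1 a2 a3 x1 x2 x3 : ℝ) : ℝ :=
  a1*a2*x1*x2 + a1*a3*x1*x3 + a2*a3*x2*x3
    - (AA a1 a2 a3 + a2*a3)*a1*x1^2 - (AA a1 a2 a3 + a1*a3)*a2*x2^2
    - (AA a1 a2 a3 + a1*a2)*a3*x3^2

/-- The quantity `F2` (determinant numerator). -/
def F2 (a1 a2 a3 x1 x2 x3 : ℝ) : ℝ :=
  let A := a1*a2 + a1*a3 + a2*a3
  (a1^2*a2*a3*(2*A + a2*a3) - A^3)*x1^4 + (a1*a2^2*a3*(2*A + a1*a3) - A^3)*x2^4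
  + (a1*a2*a3^2*(2*A + a1*a2) - A^3)*x3^4
  - 2*a1^2*(A + a2*a3)*(a2*x2 + a3*x3)*x1^3
  - 2*a2^2*(A + a1*a3)*(a1*x1 + a3*x3)*x2^3
  - 2*a3^2*(A + a1*a2)*(a2*x2 + a1*x1)*x3^3
  + (a1*a2*(2*(3*a1*a2 + a2^2 + a1^2)*a3^2 + 2*(a1 + a2)*a1*a2*a3 + a1*a2) + 2*A^3)*x1^2*x2^2
  + (a1*a3*(2*(3*a1*a3 + a3^2 + a1^2)*a2^2 + 2*(a1 + a3)*a1*a2*a3 + a1*a3) + 2*A^3)*x1^2*x3^2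
  + (a2*a3*(2*(3*a2*a3 + a3^2 + a2^2)*a1^2 + 2*(a2 + a3)*a1*a2*a3 + a2*a3) + 2*A^3)*x2^2*x3^2
  - 2*a1*a2*a3*((A + a2*a3 - a1)*x1 + (A + a1*a3 - a2)*x2 + (A + a1*a2 - a3)*x3)*x1*x2*x3

/-- The 3×3 Jacobian matrix of `(f, g, h)` at `(x1, x2, x3)`,
with entries given by partial derivatives. -/
def Jmat3 (a1 a2 a3 x1 x2 x3 : ℝ) : Matrix (Fin 3) (Fin 3) ℝ :=
  !![deriv (fun s => fRF a1 a2 a3 s x2 x3) x1, deriv (fun s => fRF a1 a2 a3 x1 s x3) x2,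
       deriv (fun s => fRF a1 a2 a3 x1 x2 s) x3;
     deriv (fun s => gRF a1 a2 a3 s x2 x3) x1, deriv (fun s => gRF a1 a2 a3 x1 s x3) x2,
       deriv (fun s => gRF a1 a2 a3 x1 x2 s) x3;
     deriv (fun s => hRF a1 a2 a3 s x2 x3) x1, deriv (fun s => hRF a1 a2 a3 x1 s x3) x2,
       deriv (fun s => hRF a1 a2 a3 x1 x2 s) x3]


open Polynomial in
lemma deriv_quad_inv (p2 p1 p0 q x : ℝ) (hx : x ≠ 0) :
    deriv (fun s => p2*s^2 + p1*s + p0 + q/s) x = 2*p2*x + p1 - q/x^2 := by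
  have h1 : HasDerivAt (fun s : ℝ => s^2) (2*x) x := by simpa using hasDerivAt_pow 2 x
  have h2 : HasDerivAt (fun s : ℝ => s⁻¹) (-(x^2)⁻¹) x := hasDerivAt_inv hx
  have h : HasDerivAt (fun s : ℝ => p2*s^2 + p1*s + p0 + q/s)
      (p2*(2*x) + p1*1 + q * (-(x^2)⁻¹)) x := by
    exact
      (((h1.const_mul p2).add ((hasDerivAt_id x).const_mul p1)).add_const p0).add
        (h2.const_mul q)
  rw [h.deriv]; field_simp; ring

open Polynomial in
lemma charpoly_fin_three (M : Matrix (Fin 3) (Fin 3) ℝ) :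
    M.charpoly = X^3 - C (M 0 0 + M 1 1 + M 2 2) * X^2
      + C (M 0 0*M 1 1 - M 0 1*M 1 0 + M 0 0*M 2 2 - M 0 2*M 2 0 + M 1 1*M 2 2 - M 1 2*M 2 1) * X
      - C M.det := by
  rw [Matrix.charpoly, Matrix.det_fin_three, Matrix.det_fin_three]
  simp only [Matrix.charmatrix_apply_eq, Matrix.charmatrix_apply_ne _ _ _ (by decide : (0:Fin 3) ≠ 1),
    Matrix.charmatrix_apply_ne _ _ _ (by decide : (0:Fin 3) ≠ 2),
    Matrix.charmatrix_apply_ne _ _ _ (by decide : (1:Fin 3) ≠ 0),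
    Matrix.charmatrix_apply_ne _ _ _ (by decide : (1:Fin 3) ≠ 2),
    Matrix.charmatrix_apply_ne _ _ _ (by decide : (2:Fin 3) ≠ 0),
    Matrix.charmatrix_apply_ne _ _ _ (by decide : (2:Fin 3) ≠ 1),
    map_add, map_sub, map_mul]
  ring

open Polynomial in
lemma charpoly_fin_three' (M : Matrix (Fin 3) (Fin 3) ℝ) :
    M.charpoly = X^3 - C M.trace * X^2
      + C ((M.trace^2 - (M*M).trace)/2) * X - C M.det := by
  rw [charpoly_fin_three]
  congr 2
  · rw [Matrix.trace_fin_three]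
  · congr 1
    simp only [Matrix.trace_fin_three, Matrix.mul_apply, Fin.sum_univ_three]
    ring

set_option maxRecDepth 16384 in
set_option maxHeartbeats 8000000 in
theorem jacobian3_invariants (a1 a2 a3 x1 x2 x3 : ℝ)
    (ha1 : a1 ≠ 0) (ha2 : a2 ≠ 0) (ha3 : a3 ≠ 0) (hA : AA a1 a2 a3 ≠ 0)
    (hx1 : 0 < x1) (hx2 : 0 < x2) (hx3 : 0 < x3) :
    (Jmat3 a1 a2 a3 x1 x2 x3).det = 0 ∧
    (Jmat3 a1 a2 a3 x1 x2 x3).trace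
      = 2 * F1 a1 a2 a3 x1 x2 x3 / (AA a1 a2 a3 * x1 * x2 * x3) ∧
    (((Jmat3 a1 a2 a3 x1 x2 x3).trace^2
        - (Jmat3 a1 a2 a3 x1 x2 x3 * Jmat3 a1 a2 a3 x1 x2 x3).trace) / 2
      = F2 a1 a2 a3 x1 x2 x3 / ((AA a1 a2 a3)^2 * x1^2 * x2^2 * x3^2)) ∧
    (Jmat3 a1 a2 a3 x1 x2 x3).charpoly
      = Polynomial.X^3
        - Polynomial.C (2 * F1 a1 a2 a3 x1 x2 x3 / (AA a1 a2 a3 * x1 * x2 * x3)) * Polynomial.X^2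
        + Polynomial.C (F2 a1 a2 a3 x1 x2 x3 / ((AA a1 a2 a3)^2 * x1^2 * x2^2 * x3^2)) * Polynomial.X := by
  have hy1 : x1 ≠ 0 := hx1.ne'
  have hy2 : x2 ≠ 0 := hx2.ne'
  have hy3 : x3 ≠ 0 := hx3.ne'
  have hA' : a1*a2 + a1*a3 + a2*a3 ≠ 0 := by simpa [AA] using hA
  have hK : (1/a1 + 1/a2 + 1/a3)⁻¹ = a1*a2*a3/(a1*a2+a1*a3+a2*a3) := by
    rw [show 1/a1+1/a2+1/a3 = (a1*a2+a1*a3+a2*a3)/(a1*a2*a3) by field_simp; ring, inv_div]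
  have e11 : deriv (fun s => fRF a1 a2 a3 s x2 x3) x1
      = (a1*a3*x1^2*x2*x3^2 + a1*a2*x1^2*x2^2*x3 - 4*a1*a2*a3*x1^3*x2*x3 - 2*a1^2*a3*x1^3*x2*x3 - 2*a1^2*a2*x1^3*x2*x3) / ((a1*a2+a1*a3+a2*a3)*x1^2*x2^2*x3^2) := by
    have heq : (fun s => fRF a1 a2 a3 s x2 x3)
        =ᶠ[nhds x1] (fun s => (-(a1+(a1*a2*a3/(a1*a2+a1*a3+a2*a3)))/(x2*x3))*s^2 + ((a1*a2*a3/(a1*a2+a1*a3+a2*a3))*(1/(a2*x2)+1/(a3*x3)))*s + (-1+a1*x2/x3+a1*x3/x2+(a1*a2*a3/(a1*a2+a1*a3+a2*a3))*(1/a1-x2/x3-x3/x2)) + (0:ℝ)/s) := by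
      filter_upwards [isOpen_Ioi.mem_nhds (show x1 ∈ Ioi (0:ℝ) from hx1)] with s hs
      have hs0 : s ≠ 0 := (mem_Ioi.mp hs).ne'
      simp only [fRF, Bfun, hK]
      field_simp
      ring
    rw [heq.deriv_eq, deriv_quad_inv _ _ _ _ _ hx1.ne']
    generalize hG : a1*a2+a1*a3+a2*a3 = G at hA' ⊢
    field_simp
    rw [← hG]
    ring
  have e12 : deriv (fun s => fRF a1 a2 a3 x1 s x3) x2
      = (-(a1*a3*x1^3*x3^2) + 2*a1*a2*a3*x1^4*x3 - a1^2*a3*x1^2*x3^3 + a1^2*a3*x1^2*x2^2*x3 + a1^2*a3*x1^4*x3 - a1^2*a2*x1^2*x3^3 + a1^2*a2*x1^2*x2^2*x3 + a1^2*a2*x1^4*x3) / ((a1*a2+a1*a3+a2*a3)*x1^2*x2^2*x3^2) := by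
    have heq : (fun s => fRF a1 a2 a3 x1 s x3)
        =ᶠ[nhds x2] (fun s => (0:ℝ)*s^2 + ((a1-(a1*a2*a3/(a1*a2+a1*a3+a2*a3)))/x3)*s + (-1+(a1*a2*a3/(a1*a2+a1*a3+a2*a3))/a1+(a1*a2*a3/(a1*a2+a1*a3+a2*a3))*x1/(a3*x3)) + (-a1*x1^2/x3+a1*x3+(a1*a2*a3/(a1*a2+a1*a3+a2*a3))*x1/a2-(a1*a2*a3/(a1*a2+a1*a3+a2*a3))*x1^2/x3-(a1*a2*a3/(a1*a2+a1*a3+a2*a3))*x3)/s) := by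
      filter_upwards [isOpen_Ioi.mem_nhds (show x2 ∈ Ioi (0:ℝ) from hx2)] with s hs
      have hs0 : s ≠ 0 := (mem_Ioi.mp hs).ne'
      simp only [fRF, Bfun, hK]
      field_simp
      ring
    rw [heq.deriv_eq, deriv_quad_inv _ _ _ _ _ hx2.ne']
    generalize hG : a1*a2+a1*a3+a2*a3 = G at hA' ⊢
    field_simp
    rw [← hG]
    ring
  have e13 : deriv (fun s => fRF a1 a2 a3 x1 x2 s) x3
      = (-(a1*a2*x1^3*x2^2) + 2*a1*a2*a3*x1^4*x2 + a1^2*a3*x1^2*x2*x3^2 - a1^2*a3*x1^2*x2^3 + a1^2*a3*x1^4*x2 + a1^2*a2*x1^2*x2*x3^2 - a1^2*a2*x1^2*x2^3 + a1^2*a2*x1^4*x2) / ((a1*a2+a1*a3+a2*a3)*x1^2*x2^2*x3^2) := by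
    have heq : (fun s => fRF a1 a2 a3 x1 x2 s)
        =ᶠ[nhds x3] (fun s => (0:ℝ)*s^2 + ((a1-(a1*a2*a3/(a1*a2+a1*a3+a2*a3)))/x2)*s + (-1+(a1*a2*a3/(a1*a2+a1*a3+a2*a3))/a1+(a1*a2*a3/(a1*a2+a1*a3+a2*a3))*x1/(a2*x2)) + (-a1*x1^2/x2+a1*x2+(a1*a2*a3/(a1*a2+a1*a3+a2*a3))*x1/a3-(a1*a2*a3/(a1*a2+a1*a3+a2*a3))*x1^2/x2-(a1*a2*a3/(a1*a2+a1*a3+a2*a3))*x2)/s) := by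
      filter_upwards [isOpen_Ioi.mem_nhds (show x3 ∈ Ioi (0:ℝ) from hx3)] with s hs
      have hs0 : s ≠ 0 := (mem_Ioi.mp hs).ne'
      simp only [fRF, Bfun, hK]
      field_simp
      ring
    rw [heq.deriv_eq, deriv_quad_inv _ _ _ _ _ hx3.ne']
    generalize hG : a1*a2+a1*a3+a2*a3 = G at hA' ⊢
    field_simp
    rw [← hG]
    ring
  have e21 : deriv (fun s => gRF a1 a2 a3 s x2 x3) x1
      = (-(a2*a3*x2^3*x3^2) - a2^2*a3*x2^2*x3^3 + a2^2*a3*x2^4*x3 + a2^2*a3*x1^2*x2^2*x3 + 2*a1*a2*a3*x2^4*x3 - a1*a2^2*x2^2*x3^3 + a1*a2^2*x2^4*x3 + a1*a2^2*x1^2*x2^2*x3) / ((a1*a2+a1*a3+a2*a3)*x1^2*x2^2*x3^2) := by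
    have heq : (fun s => gRF a1 a2 a3 s x2 x3)
        =ᶠ[nhds x1] (fun s => (0:ℝ)*s^2 + ((a2-(a1*a2*a3/(a1*a2+a1*a3+a2*a3)))/x3)*s + (-1+(a1*a2*a3/(a1*a2+a1*a3+a2*a3))/a2+(a1*a2*a3/(a1*a2+a1*a3+a2*a3))*x2/(a3*x3)) + (-a2*x2^2/x3+a2*x3+(a1*a2*a3/(a1*a2+a1*a3+a2*a3))*x2/a1-(a1*a2*a3/(a1*a2+a1*a3+a2*a3))*x2^2/x3-(a1*a2*a3/(a1*a2+a1*a3+a2*a3))*x3)/s) := by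
      filter_upwards [isOpen_Ioi.mem_nhds (show x1 ∈ Ioi (0:ℝ) from hx1)] with s hs
      have hs0 : s ≠ 0 := (mem_Ioi.mp hs).ne'
      simp only [gRF, Bfun, hK]
      field_simp
      ring
    rw [heq.deriv_eq, deriv_quad_inv _ _ _ _ _ hx1.ne']
    generalize hG : a1*a2+a1*a3+a2*a3 = G at hA' ⊢
    field_simp
    rw [← hG]
    ring
  have e22 : deriv (fun s => gRF a1 a2 a3 x1 s x3) x2
      = (a2*a3*x1*x2^2*x3^2 - 2*a2^2*a3*x1*x2^3*x3 + a1*a2*x1^2*x2^2*x3 - 4*a1*a2*a3*x1*x2^3*x3 - 2*a1*a2^2*x1*x2^3*x3) / ((a1*a2+a1*a3+a2*a3)*x1^2*x2^2*x3^2) := by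
    have heq : (fun s => gRF a1 a2 a3 x1 s x3)
        =ᶠ[nhds x2] (fun s => (-(a2+(a1*a2*a3/(a1*a2+a1*a3+a2*a3)))/(x1*x3))*s^2 + ((a1*a2*a3/(a1*a2+a1*a3+a2*a3))*(1/(a1*x1)+1/(a3*x3)))*s + (-1+a2*x3/x1+a2*x1/x3+(a1*a2*a3/(a1*a2+a1*a3+a2*a3))*(1/a2-x3/x1-x1/x3)) + (0:ℝ)/s) := by
      filter_upwards [isOpen_Ioi.mem_nhds (show x2 ∈ Ioi (0:ℝ) from hx2)] with s hs
      have hs0 : s ≠ 0 := (mem_Ioi.mp hs).ne'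
      simp only [gRF, Bfun, hK]
      field_simp
      ring
    rw [heq.deriv_eq, deriv_quad_inv _ _ _ _ _ hx2.ne']
    generalize hG : a1*a2+a1*a3+a2*a3 = G at hA' ⊢
    field_simp
    rw [← hG]
    ring
  have e23 : deriv (fun s => gRF a1 a2 a3 x1 x2 s) x3
      = (a2^2*a3*x1*x2^2*x3^2 + a2^2*a3*x1*x2^4 - a2^2*a3*x1^3*x2^2 - a1*a2*x1^2*x2^3 + 2*a1*a2*a3*x1*x2^4 + a1*a2^2*x1*x2^2*x3^2 + a1*a2^2*x1*x2^4 - a1*a2^2*x1^3*x2^2) / ((a1*a2+a1*a3+a2*a3)*x1^2*x2^2*x3^2) := by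
    have heq : (fun s => gRF a1 a2 a3 x1 x2 s)
        =ᶠ[nhds x3] (fun s => (0:ℝ)*s^2 + ((a2-(a1*a2*a3/(a1*a2+a1*a3+a2*a3)))/x1)*s + (-1+(a1*a2*a3/(a1*a2+a1*a3+a2*a3))/a2+(a1*a2*a3/(a1*a2+a1*a3+a2*a3))*x2/(a1*x1)) + (-a2*x2^2/x1+a2*x1+(a1*a2*a3/(a1*a2+a1*a3+a2*a3))*x2/a3-(a1*a2*a3/(a1*a2+a1*a3+a2*a3))*x2^2/x1-(a1*a2*a3/(a1*a2+a1*a3+a2*a3))*x1)/s) := by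
      filter_upwards [isOpen_Ioi.mem_nhds (show x3 ∈ Ioi (0:ℝ) from hx3)] with s hs
      have hs0 : s ≠ 0 := (mem_Ioi.mp hs).ne'
      simp only [gRF, Bfun, hK]
      field_simp
      ring
    rw [heq.deriv_eq, deriv_quad_inv _ _ _ _ _ hx3.ne']
    generalize hG : a1*a2+a1*a3+a2*a3 = G at hA' ⊢
    field_simp
    rw [← hG]
    ring
  have e31 : deriv (fun s => hRF a1 a2 a3 s x2 x3) x1
      = (-(a2*a3*x2^2*x3^3) + a2*a3^2*x2*x3^4 - a2*a3^2*x2^3*x3^2 + a2*a3^2*x1^2*x2*x3^2 + a1*a3^2*x2*x3^4 - a1*a3^2*x2^3*x3^2 + a1*a3^2*x1^2*x2*x3^2 + 2*a1*a2*a3*x2*x3^4) / ((a1*a2+a1*a3+a2*a3)*x1^2*x2^2*x3^2) := by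
    have heq : (fun s => hRF a1 a2 a3 s x2 x3)
        =ᶠ[nhds x1] (fun s => (0:ℝ)*s^2 + ((a3-(a1*a2*a3/(a1*a2+a1*a3+a2*a3)))/x2)*s + (-1+(a1*a2*a3/(a1*a2+a1*a3+a2*a3))/a3+(a1*a2*a3/(a1*a2+a1*a3+a2*a3))*x3/(a2*x2)) + (-a3*x3^2/x2+a3*x2+(a1*a2*a3/(a1*a2+a1*a3+a2*a3))*x3/a1-(a1*a2*a3/(a1*a2+a1*a3+a2*a3))*x3^2/x2-(a1*a2*a3/(a1*a2+a1*a3+a2*a3))*x2)/s) := by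
      filter_upwards [isOpen_Ioi.mem_nhds (show x1 ∈ Ioi (0:ℝ) from hx1)] with s hs
      have hs0 : s ≠ 0 := (mem_Ioi.mp hs).ne'
      simp only [hRF, Bfun, hK]
      field_simp
      ring
    rw [heq.deriv_eq, deriv_quad_inv _ _ _ _ _ hx1.ne']
    generalize hG : a1*a2+a1*a3+a2*a3 = G at hA' ⊢
    field_simp
    rw [← hG]
    ring
  have e32 : deriv (fun s => hRF a1 a2 a3 x1 s x3) x2
      = (a2*a3^2*x1*x3^4 + a2*a3^2*x1*x2^2*x3^2 - a2*a3^2*x1^3*x3^2 - a1*a3*x1^2*x3^3 + a1*a3^2*x1*x3^4 + a1*a3^2*x1*x2^2*x3^2 - a1*a3^2*x1^3*x3^2 + 2*a1*a2*a3*x1*x3^4) / ((a1*a2+a1*a3+a2*a3)*x1^2*x2^2*x3^2) := by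
    have heq : (fun s => hRF a1 a2 a3 x1 s x3)
        =ᶠ[nhds x2] (fun s => (0:ℝ)*s^2 + ((a3-(a1*a2*a3/(a1*a2+a1*a3+a2*a3)))/x1)*s + (-1+(a1*a2*a3/(a1*a2+a1*a3+a2*a3))/a3+(a1*a2*a3/(a1*a2+a1*a3+a2*a3))*x3/(a1*x1)) + (-a3*x3^2/x1+a3*x1+(a1*a2*a3/(a1*a2+a1*a3+a2*a3))*x3/a2-(a1*a2*a3/(a1*a2+a1*a3+a2*a3))*x3^2/x1-(a1*a2*a3/(a1*a2+a1*a3+a2*a3))*x1)/s) := by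
      filter_upwards [isOpen_Ioi.mem_nhds (show x2 ∈ Ioi (0:ℝ) from hx2)] with s hs
      have hs0 : s ≠ 0 := (mem_Ioi.mp hs).ne'
      simp only [hRF, Bfun, hK]
      field_simp
      ring
    rw [heq.deriv_eq, deriv_quad_inv _ _ _ _ _ hx2.ne']
    generalize hG : a1*a2+a1*a3+a2*a3 = G at hA' ⊢
    field_simp
    rw [← hG]
    ring
  have e33 : deriv (fun s => hRF a1 a2 a3 x1 x2 s) x3
      = (a2*a3*x1*x2^2*x3^2 - 2*a2*a3^2*x1*x2*x3^3 + a1*a3*x1^2*x2*x3^2 - 2*a1*a3^2*x1*x2*x3^3 - 4*a1*a2*a3*x1*x2*x3^3) / ((a1*a2+a1*a3+a2*a3)*x1^2*x2^2*x3^2) := by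
    have heq : (fun s => hRF a1 a2 a3 x1 x2 s)
        =ᶠ[nhds x3] (fun s => (-(a3+(a1*a2*a3/(a1*a2+a1*a3+a2*a3)))/(x1*x2))*s^2 + ((a1*a2*a3/(a1*a2+a1*a3+a2*a3))*(1/(a1*x1)+1/(a2*x2)))*s + (-1+a3*x1/x2+a3*x2/x1+(a1*a2*a3/(a1*a2+a1*a3+a2*a3))*(1/a3-x1/x2-x2/x1)) + (0:ℝ)/s) := by
      filter_upwards [isOpen_Ioi.mem_nhds (show x3 ∈ Ioi (0:ℝ) from hx3)] with s hs
      have hs0 : s ≠ 0 := (mem_Ioi.mp hs).ne'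
      simp only [hRF, Bfun, hK]
      field_simp
      ring
    rw [heq.deriv_eq, deriv_quad_inv _ _ _ _ _ hx3.ne']
    generalize hG : a1*a2+a1*a3+a2*a3 = G at hA' ⊢
    field_simp
    rw [← hG]
    ring

  have hJ : Jmat3 a1 a2 a3 x1 x2 x3 = !![
      (a1*a3*x1^2*x2*x3^2 + a1*a2*x1^2*x2^2*x3 - 4*a1*a2*a3*x1^3*x2*x3 - 2*a1^2*a3*x1^3*x2*x3 - 2*a1^2*a2*x1^3*x2*x3) / ((a1*a2+a1*a3+a2*a3)*x1^2*x2^2*x3^2),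
      (-(a1*a3*x1^3*x3^2) + 2*a1*a2*a3*x1^4*x3 - a1^2*a3*x1^2*x3^3 + a1^2*a3*x1^2*x2^2*x3 + a1^2*a3*x1^4*x3 - a1^2*a2*x1^2*x3^3 + a1^2*a2*x1^2*x2^2*x3 + a1^2*a2*x1^4*x3) / ((a1*a2+a1*a3+a2*a3)*x1^2*x2^2*x3^2),
      (-(a1*a2*x1^3*x2^2) + 2*a1*a2*a3*x1^4*x2 + a1^2*a3*x1^2*x2*x3^2 - a1^2*a3*x1^2*x2^3 + a1^2*a3*x1^4*x2 + a1^2*a2*x1^2*x2*x3^2 - a1^2*a2*x1^2*x2^3 + a1^2*a2*x1^4*x2) / ((a1*a2+a1*a3+a2*a3)*x1^2*x2^2*x3^2);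
      (-(a2*a3*x2^3*x3^2) - a2^2*a3*x2^2*x3^3 + a2^2*a3*x2^4*x3 + a2^2*a3*x1^2*x2^2*x3 + 2*a1*a2*a3*x2^4*x3 - a1*a2^2*x2^2*x3^3 + a1*a2^2*x2^4*x3 + a1*a2^2*x1^2*x2^2*x3) / ((a1*a2+a1*a3+a2*a3)*x1^2*x2^2*x3^2),
      (a2*a3*x1*x2^2*x3^2 - 2*a2^2*a3*x1*x2^3*x3 + a1*a2*x1^2*x2^2*x3 - 4*a1*a2*a3*x1*x2^3*x3 - 2*a1*a2^2*x1*x2^3*x3) / ((a1*a2+a1*a3+a2*a3)*x1^2*x2^2*x3^2),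
      (a2^2*a3*x1*x2^2*x3^2 + a2^2*a3*x1*x2^4 - a2^2*a3*x1^3*x2^2 - a1*a2*x1^2*x2^3 + 2*a1*a2*a3*x1*x2^4 + a1*a2^2*x1*x2^2*x3^2 + a1*a2^2*x1*x2^4 - a1*a2^2*x1^3*x2^2) / ((a1*a2+a1*a3+a2*a3)*x1^2*x2^2*x3^2);
      (-(a2*a3*x2^2*x3^3) + a2*a3^2*x2*x3^4 - a2*a3^2*x2^3*x3^2 + a2*a3^2*x1^2*x2*x3^2 + a1*a3^2*x2*x3^4 - a1*a3^2*x2^3*x3^2 + a1*a3^2*x1^2*x2*x3^2 + 2*a1*a2*a3*x2*x3^4) / ((a1*a2+a1*a3+a2*a3)*x1^2*x2^2*x3^2),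
      (a2*a3^2*x1*x3^4 + a2*a3^2*x1*x2^2*x3^2 - a2*a3^2*x1^3*x3^2 - a1*a3*x1^2*x3^3 + a1*a3^2*x1*x3^4 + a1*a3^2*x1*x2^2*x3^2 - a1*a3^2*x1^3*x3^2 + 2*a1*a2*a3*x1*x3^4) / ((a1*a2+a1*a3+a2*a3)*x1^2*x2^2*x3^2),
      (a2*a3*x1*x2^2*x3^2 - 2*a2*a3^2*x1*x2*x3^3 + a1*a3*x1^2*x2*x3^2 - 2*a1*a3^2*x1*x2*x3^3 - 4*a1*a2*a3*x1*x2*x3^3) / ((a1*a2+a1*a3+a2*a3)*x1^2*x2^2*x3^2)] := by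
    rw [Jmat3, e11, e12, e13, e21, e22, e23, e31, e32, e33]
  have hdet : (Jmat3 a1 a2 a3 x1 x2 x3).det = 0 := by
    rw [hJ, Matrix.det_fin_three]
    simp
    field_simp
    ring
  have htr : (Jmat3 a1 a2 a3 x1 x2 x3).trace
      = 2 * F1 a1 a2 a3 x1 x2 x3 / (AA a1 a2 a3 * x1 * x2 * x3) := by
    rw [hJ]
    simp [Matrix.trace_fin_three]
    simp only [F1, AA]
    field_simp
    ring
  have htrMM : (Jmat3 a1 a2 a3 x1 x2 x3 * Jmat3 a1 a2 a3 x1 x2 x3).trace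
      = (2*a2^2*a3^2*x1^2*x2^4*x3^4 - 4*a2^2*a3^3*x1^2*x2^3*x3^5 + 4*a2^2*a3^4*x1^2*x2^2*x3^6 - 4*a2^3*a3^2*x1^2*x2^5*x3^3 + 2*a2^3*a3^3*x1^2*x2^2*x3^6 + 4*a2^3*a3^3*x1^2*x2^4*x3^4 + 2*a2^3*a3^3*x1^2*x2^6*x3^2 - 4*a2^3*a3^3*x1^4*x2^2*x3^4 - 4*a2^3*a3^3*x1^4*x2^4*x3^2 + 2*a2^3*a3^3*x1^6*x2^2*x3^2 + 4*a2^4*a3^2*x1^2*x2^6*x3^2 + 4*a1*a2*a3^2*x1^3*x2^3*x3^4 - 4*a1*a2*a3^3*x1^2*x2^3*x3^5 - 4*a1*a2*a3^3*x1^3*x2^2*x3^5 + 8*a1*a2*a3^4*x1^2*x2^2*x3^6 + 4*a1*a2^2*a3*x1^3*x2^4*x3^3 - 8*a1*a2^2*a3^2*x1^2*x2^3*x3^5 - 8*a1*a2^2*a3^2*x1^2*x2^5*x3^3 - 4*a1*a2^2*a3^2*x1^3*x2^3*x3^4 - 4*a1*a2^2*a3^2*x1^3*x2^4*x3^3 -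 8*a1*a2^2*a3^2*x1^4*x2^3*x3^3 + 18*a1*a2^2*a3^3*x1^2*x2^2*x3^6 + 8*a1*a2^2*a3^3*x1^2*x2^4*x3^4 + 6*a1*a2^2*a3^3*x1^2*x2^6*x3^2 - 12*a1*a2^2*a3^3*x1^4*x2^4*x3^2 + 6*a1*a2^2*a3^3*x1^6*x2^2*x3^2 - 4*a1*a2^3*a3*x1^2*x2^5*x3^3 - 4*a1*a2^3*a3*x1^3*x2^5*x3^2 + 6*a1*a2^3*a3^2*x1^2*x2^2*x3^6 + 8*a1*a2^3*a3^2*x1^2*x2^4*x3^4 + 18*a1*a2^3*a3^2*x1^2*x2^6*x3^2 - 12*a1*a2^3*a3^2*x1^4*x2^2*x3^4 + 6*a1*a2^3*a3^2*x1^6*x2^2*x3^2 + 8*a1*a2^4*a3*x1^2*x2^6*x3^2 + 2*a1^2*a3^2*x1^4*x2^2*x3^4 - 4*a1^2*a3^3*x1^3*x2^2*x3^5 + 4*a1^2*a3^4*x1^2*x2^2*x3^6 + 4*a1^2*a2*a3*x1^4*x2^3*x3^3 - 8*a1^2*a2*a3^2*x1^3*x2^2*x3^5 - 4*a1^2*a2*a3^2*x1^3*x2^3*x3^4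 - 8*a1^2*a2*a3^2*x1^3*x2^4*x3^3 - 4*a1^2*a2*a3^2*x1^4*x2^3*x3^3 - 8*a1^2*a2*a3^2*x1^5*x2^2*x3^3 + 18*a1^2*a2*a3^3*x1^2*x2^2*x3^6 + 6*a1^2*a2*a3^3*x1^2*x2^6*x3^2 + 8*a1^2*a2*a3^3*x1^4*x2^2*x3^4 - 12*a1^2*a2*a3^3*x1^4*x2^4*x3^2 + 6*a1^2*a2*a3^3*x1^6*x2^2*x3^2 + 2*a1^2*a2^2*x1^4*x2^4*x3^2 - 8*a1^2*a2^2*a3*x1^3*x2^3*x3^4 - 4*a1^2*a2^2*a3*x1^3*x2^4*x3^3 - 8*a1^2*a2^2*a3*x1^3*x2^5*x3^2 - 4*a1^2*a2^2*a3*x1^4*x2^3*x3^3 - 8*a1^2*a2^2*a3*x1^5*x2^3*x3^2 + 22*a1^2*a2^2*a3^2*x1^2*x2^2*x3^6 + 4*a1^2*a2^2*a3^2*x1^2*x2^4*x3^4 + 22*a1^2*a2^2*a3^2*x1^2*x2^6*x3^2 + 4*a1^2*a2^2*a3^2*x1^4*x2^2*x3^4 + 4*a1^2*a2^2*a3^2*x1^4*x2^4*x3^2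 + 22*a1^2*a2^2*a3^2*x1^6*x2^2*x3^2 - 4*a1^2*a2^3*x1^3*x2^5*x3^2 + 6*a1^2*a2^3*a3*x1^2*x2^2*x3^6 + 18*a1^2*a2^3*a3*x1^2*x2^6*x3^2 - 12*a1^2*a2^3*a3*x1^4*x2^2*x3^4 + 8*a1^2*a2^3*a3*x1^4*x2^4*x3^2 + 6*a1^2*a2^3*a3*x1^6*x2^2*x3^2 + 4*a1^2*a2^4*x1^2*x2^6*x3^2 - 4*a1^3*a3^2*x1^5*x2^2*x3^3 + 2*a1^3*a3^3*x1^2*x2^2*x3^6 - 4*a1^3*a3^3*x1^2*x2^4*x3^4 + 2*a1^3*a3^3*x1^2*x2^6*x3^2 + 4*a1^3*a3^3*x1^4*x2^2*x3^4 - 4*a1^3*a3^3*x1^4*x2^4*x3^2 + 2*a1^3*a3^3*x1^6*x2^2*x3^2 - 4*a1^3*a2*a3*x1^5*x2^2*x3^3 - 4*a1^3*a2*a3*x1^5*x2^3*x3^2 + 6*a1^3*a2*a3^2*x1^2*x2^2*x3^6 - 12*a1^3*a2*a3^2*x1^2*x2^4*x3^4 + 6*a1^3*a2*a3^2*x1^2*x2^6*x3^2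 + 8*a1^3*a2*a3^2*x1^4*x2^2*x3^4 + 18*a1^3*a2*a3^2*x1^6*x2^2*x3^2 - 4*a1^3*a2^2*x1^5*x2^3*x3^2 + 6*a1^3*a2^2*a3*x1^2*x2^2*x3^6 - 12*a1^3*a2^2*a3*x1^2*x2^4*x3^4 + 6*a1^3*a2^2*a3*x1^2*x2^6*x3^2 + 8*a1^3*a2^2*a3*x1^4*x2^4*x3^2 + 18*a1^3*a2^2*a3*x1^6*x2^2*x3^2 + 2*a1^3*a2^3*x1^2*x2^2*x3^6 - 4*a1^3*a2^3*x1^2*x2^4*x3^4 + 2*a1^3*a2^3*x1^2*x2^6*x3^2 - 4*a1^3*a2^3*x1^4*x2^2*x3^4 + 4*a1^3*a2^3*x1^4*x2^4*x3^2 + 2*a1^3*a2^3*x1^6*x2^2*x3^2 + 4*a1^4*a3^2*x1^6*x2^2*x3^2 + 8*a1^4*a2*a3*x1^6*x2^2*x3^2 + 4*a1^4*a2^2*x1^6*x2^2*x3^2)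
        / (((a1*a2+a1*a3+a2*a3)*x1^2*x2^2*x3^2)^2) := by
    rw [hJ]
    simp [Matrix.trace_fin_three, Matrix.mul_apply, Fin.sum_univ_three]
    field_simp
    ring
  have hs2 : (((Jmat3 a1 a2 a3 x1 x2 x3).trace^2
        - (Jmat3 a1 a2 a3 x1 x2 x3 * Jmat3 a1 a2 a3 x1 x2 x3).trace) / 2)
      = F2 a1 a2 a3 x1 x2 x3 / ((AA a1 a2 a3)^2 * x1^2 * x2^2 * x3^2) := by
    rw [htr, htrMM]
    simp only [F1, F2, AA]
    field_simp
    ring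
  refine ⟨hdet, htr, hs2, ?_⟩
  rw [charpoly_fin_three', hdet, hs2, htr, Polynomial.C_0, sub_zero]
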